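/- In a maximal [r,s,t]-coloring of a graph G, if a singleton-class vertex w_k has no neighbor in a size-3 class X_i, then for every size-2 class U_j: there are at least 3 edges between X_i and U_j, at least 4 edges between {w_k} ∪ X_i and U_j, and some vertex β ∈ U_j has at least 3 neighbors in {w_k} ∪ X_i. -/

import Mathlib

open Finset

variable {V : Type*}

/-- `P` is the set of color classes of an `[r,s,t]`-coloring of `G`:
a partition of the vertices into independent sets, with `r` classes of size 3,
`s` classes of size 2 and `t` singleton classes. -/
def IsRST [Fintype V] [DecidableEq V] (G : SimpleGraph V) (P : Finset (Finset V))
    (r s t : ℕ) : Prop :=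
  (∀ v : V, ∃! A, A ∈ P ∧ v ∈ A) ∧
  (∀ A ∈ P, ∀ u ∈ A, ∀ w ∈ A, ¬ G.Adj u w) ∧
  (P.filter (fun A => A.card = 3)).card = r ∧
  (P.filter (fun A => A.card = 2)).card = s ∧
  (P.filter (fun A => A.card = 1)).card = t ∧
  (∀ A ∈ P, A.card = 1 ∨ A.card = 2 ∨ A.card = 3)

/-- A maximal `[r,s,t]`-coloring: for any other `[r',s',t']`-coloring,
either `r > r'`, or `r = r'` and `s ≥ s'`. -/
def IsMaxRST [Fintype V] [DecidableEq V] (G : SimpleGraph V) (P : Finset (Finset V))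
    (r s t : ℕ) : Prop :=
  IsRST G P r s t ∧
  ∀ (P' : Finset (Finset V)) (r' s' t' : ℕ), IsRST G P' r' s' t' →
    r' < r ∨ (r' = r ∧ s' ≤ s)

/-- `eB G X Y` is the number of edges with one endpoint in `X` and the other in `Y`. -/
def eB [Fintype V] [DecidableEq V] (G : SimpleGraph V) [DecidableRel G.Adj]
    (X Y : Finset V) : ℕ :=
  ((X ×ˢ Y).filter fun p => G.Adj p.1 p.2).card

/-- `G` is equitably `k`-colorable: a proper `k`-coloring whose color classes
have sizes differing pairwise by at most 1. -/
def EqColorable [Fintype V] (G : SimpleGraph V) (k : ℕ) : Prop :=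
  ∃ C : V → Fin k, (∀ u v, G.Adj u v → C u ≠ C v) ∧
    ∀ i j : Fin k,
      (Finset.univ.filter fun v => C v = i).card ≤
        (Finset.univ.filter fun v => C v = j).card + 1

lemma eB_sum_left [Fintype V] [DecidableEq V] (G : SimpleGraph V) [DecidableRel G.Adj]
    (S T : Finset V) : eB G S T = ∑ x ∈ S, (T.filter (fun y => G.Adj x y)).card := by
  unfold eB
  rw [Finset.card_filter, Finset.sum_product]
  simp only [← Finset.card_filter]

lemma eB_sum_right [Fintype V] [DecidableEq V] (G : SimpleGraph V) [DecidableRel G.Adj]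
    (S T : Finset V) : eB G S T = ∑ y ∈ T, (S.filter (fun x => G.Adj x y)).card := by
  unfold eB
  rw [Finset.card_filter, Finset.sum_product, Finset.sum_comm]
  simp only [← Finset.card_filter]

lemma indep3 [DecidableEq V] (G : SimpleGraph V) {a b c : V}
    (hab : ¬G.Adj a b) (hac : ¬G.Adj a c) (hbc : ¬G.Adj b c) :
    ∀ p ∈ ({a, b, c} : Finset V), ∀ q ∈ ({a, b, c} : Finset V), ¬ G.Adj p q := by
  intro p hp q hq
  simp only [Finset.mem_insert, Finset.mem_singleton] at hp hq
  rcases hp with rfl | rfl | rfl <;> rcases hq with rfl | rfl | rfl <;>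
    first
      | exact G.loopless.irrefl _
      | assumption
      | exact fun h => hab h.symm
      | exact fun h => hac h.symm
      | exact fun h => hbc h.symm

lemma indep_insert [DecidableEq V] (G : SimpleGraph V) {x : V} {S : Finset V}
    (hS : ∀ a ∈ S, ∀ b ∈ S, ¬ G.Adj a b) (hx : ∀ a ∈ S, ¬ G.Adj x a) :
    ∀ p ∈ insert x S, ∀ q ∈ insert x S, ¬ G.Adj p q := by
  intro p hp q hq
  rcases Finset.mem_insert.mp hp with hp' | hp' <;>
    rcases Finset.mem_insert.mp hq with hq' | hq'
  · rw [hp', hq']; exact G.loopless.irrefl _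
  · rw [hp']; exact hx q hq'
  · rw [hq']; exact fun h => hx p hp' h.symm
  · exact hS p hp' q hq'

lemma class_eq {P : Finset (Finset V)} (huniq : ∀ v : V, ∃! A, A ∈ P ∧ v ∈ A)
    {B C : Finset V} (hB : B ∈ P) (hC : C ∈ P) {v : V} (hvB : v ∈ B) (hvC : v ∈ C) :
    B = C := by
  obtain ⟨D, _, hD⟩ := huniq v
  rw [hD B ⟨hB, hvB⟩, hD C ⟨hC, hvC⟩]

lemma swap_lemma [Fintype V] [DecidableEq V] (G : SimpleGraph V)
    (P : Finset (Finset V)) (r s t : ℕ) (h : IsMaxRST G P r s t)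
    (A X U : Finset V) (hA : A ∈ P) (hX : X ∈ P) (hU : U ∈ P)
    (hcA : A.card = 1) (hcX : X.card = 3) (hcU : U.card = 2)
    (Y₁ Y₂ : Finset V) (hY1c : Y₁.card = 3) (hY2c : Y₂.card = 3)
    (hun : Y₁ ∪ Y₂ = A ∪ X ∪ U) (hdisj : Disjoint Y₁ Y₂)
    (hY1i : ∀ a ∈ Y₁, ∀ b ∈ Y₁, ¬ G.Adj a b)
    (hY2i : ∀ a ∈ Y₂, ∀ b ∈ Y₂, ¬ G.Adj a b) : False := by
  obtain ⟨⟨huniq, hind, hr, hs, ht, hsz⟩, hmax⟩ := h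
  set Q : Finset (Finset V) := ((P.erase A).erase X).erase U with hQdef
  have hQmem : ∀ {B : Finset V}, B ∈ Q ↔ B ∈ P ∧ B ≠ A ∧ B ≠ X ∧ B ≠ U := by
    intro B
    simp only [hQdef, Finset.mem_erase]
    tauto
  have hY1sub : Y₁ ⊆ A ∪ X ∪ U := hun ▸ Finset.subset_union_left
  have hY2sub : Y₂ ⊆ A ∪ X ∪ U := hun ▸ Finset.subset_union_right
  have hnotP : ∀ Y : Finset V, Y.Nonempty → Y ⊆ A ∪ X ∪ U → Y ∉ Q := by
    rintro Y ⟨x, hx⟩ hsub hYQ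
    obtain ⟨hYP, hYA, hYX, hYU⟩ := hQmem.mp hYQ
    rcases Finset.mem_union.mp (hsub hx) with h' | h'
    · rcases Finset.mem_union.mp h' with h'' | h''
      · exact hYA (class_eq huniq hYP hA hx h'')
      · exact hYX (class_eq huniq hYP hX hx h'')
    · exact hYU (class_eq huniq hYP hU hx h')
  have hY1ne : Y₁.Nonempty := by rw [← Finset.card_pos, hY1c]; norm_num
  have hY2ne : Y₂.Nonempty := by rw [← Finset.card_pos, hY2c]; norm_num
  have hYY : Y₁ ≠ Y₂ := by
    rintro rfl
    obtain ⟨x, hx⟩ := hY1ne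
    exact Finset.disjoint_left.mp hdisj hx hx
  have hY1Q : Y₁ ∉ Q := hnotP Y₁ hY1ne hY1sub
  have hY2Q : Y₂ ∉ Q := hnotP Y₂ hY2ne hY2sub
  set P' : Finset (Finset V) := insert Y₁ (insert Y₂ Q) with hP'def
  have hmemP' : ∀ {B : Finset V}, B ∈ P' ↔ B = Y₁ ∨ B = Y₂ ∨ B ∈ Q := by
    intro B; simp [hP'def]
  have hpart : ∀ v : V, ∃! B, B ∈ P' ∧ v ∈ B := by
    intro v
    by_cases hv : v ∈ A ∪ X ∪ U
    · have hv12 : v ∈ Y₁ ∪ Y₂ := hun ▸ hv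
      have hQno : ∀ B ∈ Q, v ∉ B := by
        intro B hB hvB
        obtain ⟨hBP, hBA, hBX, hBU⟩ := hQmem.mp hB
        rcases Finset.mem_union.mp hv with h' | h'
        · rcases Finset.mem_union.mp h' with h'' | h''
          · exact hBA (class_eq huniq hBP hA hvB h'')
          · exact hBX (class_eq huniq hBP hX hvB h'')
        · exact hBU (class_eq huniq hBP hU hvB h')
      rcases Finset.mem_union.mp hv12 with h1 | h2
      · refine ⟨Y₁, ⟨hmemP'.mpr (Or.inl rfl), h1⟩, ?_⟩
        rintro B ⟨hBP', hvB⟩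
        rcases hmemP'.mp hBP' with rfl | rfl | hBQ
        · rfl
        · exact absurd h1 (Finset.disjoint_right.mp hdisj hvB)
        · exact absurd hvB (hQno _ hBQ)
      · refine ⟨Y₂, ⟨hmemP'.mpr (Or.inr (Or.inl rfl)), h2⟩, ?_⟩
        rintro B ⟨hBP', hvB⟩
        rcases hmemP'.mp hBP' with rfl | rfl | hBQ
        · exact absurd hvB (Finset.disjoint_right.mp hdisj h2)
        · rfl
        · exact absurd hvB (hQno _ hBQ)
    · obtain ⟨B, ⟨hBP, hvB⟩, hBu⟩ := huniq v
      have hBQ : B ∈ Q := by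
        refine hQmem.mpr ⟨hBP, ?_, ?_, ?_⟩ <;> rintro rfl
        · exact hv (Finset.mem_union.mpr (Or.inl (Finset.mem_union.mpr (Or.inl hvB))))
        · exact hv (Finset.mem_union.mpr (Or.inl (Finset.mem_union.mpr (Or.inr hvB))))
        · exact hv (Finset.mem_union.mpr (Or.inr hvB))
      refine ⟨B, ⟨hmemP'.mpr (Or.inr (Or.inr hBQ)), hvB⟩, ?_⟩
      rintro C ⟨hCP', hvC⟩
      rcases hmemP'.mp hCP' with rfl | rfl | hCQ
      · exact absurd (hY1sub hvC) hv
      · exact absurd (hY2sub hvC) hv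
      · exact hBu C ⟨(hQmem.mp hCQ).1, hvC⟩
  have hind' : ∀ B ∈ P', ∀ a ∈ B, ∀ b ∈ B, ¬ G.Adj a b := by
    intro B hB
    rcases hmemP'.mp hB with rfl | rfl | hBQ
    · exact hY1i
    · exact hY2i
    · exact hind B (hQmem.mp hBQ).1
  have hsz' : ∀ B ∈ P', B.card = 1 ∨ B.card = 2 ∨ B.card = 3 := by
    intro B hB
    rcases hmemP'.mp hB with rfl | rfl | hBQ
    · exact Or.inr (Or.inr hY1c)
    · exact Or.inr (Or.inr hY2c)
    · exact hsz B (hQmem.mp hBQ).1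
  have hRST : IsRST G P' (P'.filter (fun B => B.card = 3)).card
      (P'.filter (fun B => B.card = 2)).card (P'.filter (fun B => B.card = 1)).card :=
    ⟨hpart, hind', rfl, rfl, rfl, hsz'⟩
  have hXf : X ∈ P.filter (fun B => B.card = 3) := Finset.mem_filter.mpr ⟨hX, hcX⟩
  have hEQ : (P.filter (fun B => B.card = 3)).erase X ⊆ Q := by
    intro B hB
    obtain ⟨hBX, hBf⟩ := Finset.mem_erase.mp hB
    obtain ⟨hBP, hB3⟩ := Finset.mem_filter.mp hBf
    refine hQmem.mpr ⟨hBP, ?_, hBX, ?_⟩ <;> rintro rfl <;> omega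
  have hsubf : insert Y₁ (insert Y₂ ((P.filter (fun B => B.card = 3)).erase X)) ⊆
      P'.filter (fun B => B.card = 3) := by
    intro B hB
    rcases Finset.mem_insert.mp hB with rfl | hB
    · exact Finset.mem_filter.mpr ⟨hmemP'.mpr (Or.inl rfl), hY1c⟩
    rcases Finset.mem_insert.mp hB with rfl | hB
    · exact Finset.mem_filter.mpr ⟨hmemP'.mpr (Or.inr (Or.inl rfl)), hY2c⟩
    · exact Finset.mem_filter.mpr ⟨hmemP'.mpr (Or.inr (Or.inr (hEQ hB))),
        (Finset.mem_filter.mp (Finset.mem_erase.mp hB).2).2⟩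
  have hY1e : Y₁ ∉ insert Y₂ ((P.filter (fun B => B.card = 3)).erase X) := by
    intro hmem
    rcases Finset.mem_insert.mp hmem with e | hmem
    · exact hYY e
    · exact hY1Q (hEQ hmem)
  have hY2e : Y₂ ∉ (P.filter (fun B => B.card = 3)).erase X := fun hmem => hY2Q (hEQ hmem)
  have hrpos : 1 ≤ r := by
    rw [← hr]
    exact Finset.card_pos.mpr ⟨X, hXf⟩
  have hcard : r + 1 ≤ (P'.filter (fun B => B.card = 3)).card := by
    have := Finset.card_le_card hsubf
    rw [Finset.card_insert_of_notMem hY1e, Finset.card_insert_of_notMem hY2e,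
      Finset.card_erase_of_mem hXf, hr] at this
    omega
  rcases hmax P' _ _ _ hRST with hlt | ⟨heq, _⟩
  · omega
  · omega

theorem stmt8 [Fintype V] [DecidableEq V] (G : SimpleGraph V) [DecidableRel G.Adj]
    (P : Finset (Finset V)) (r s t : ℕ)
    (h : IsMaxRST G P r s t)
    (A X : Finset V) (w : V)
    (hA : A ∈ P) (hAw : A = {w})
    (hX : X ∈ P) (hX3 : X.card = 3)
    (h0 : eB G {w} X = 0) :
    ∀ U ∈ P, U.card = 2 →
      3 ≤ eB G X U ∧ 4 ≤ eB G (insert w X) U ∧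
        ∃ β ∈ U, 3 ≤ eB G (insert w X) {β} := by

  subst hAw
  have huniq := h.1.1
  have hind := h.1.2.1
  have hw0 : ∀ x ∈ X, ¬ G.Adj w x := by
    have h0' : (X.filter (fun y => G.Adj w y)).card = 0 := by
      have he := eB_sum_left G {w} X
      rw [h0, Finset.sum_singleton] at he
      omega
    rw [Finset.card_eq_zero, Finset.filter_eq_empty_iff] at h0'
    exact h0'
  have hwX : w ∉ X := by
    intro hw
    have := class_eq huniq hA hX (Finset.mem_singleton_self w) hw
    rw [← this] at hX3
    simp at hX3
  intro U hU hU2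
  have hAU : ({w} : Finset V) ≠ U := by
    intro e
    rw [← e] at hU2
    simp at hU2
  have hwU : w ∉ U := fun hw => hAU (class_eq huniq hA hU (Finset.mem_singleton_self w) hw)
  have hXU : X ≠ U := by
    intro e
    rw [e, hU2] at hX3
    omega
  have hXUd : ∀ {z : V}, z ∈ X → z ∉ U := fun hz hzU => hXU (class_eq huniq hX hU hz hzU)
  obtain ⟨u, v, huv, hUuv⟩ := Finset.card_eq_two.mp hU2
  -- Step (a): every vertex of X has a neighbour in U
  have ha : ∀ x ∈ X, ∃ y ∈ U, G.Adj x y := by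
    intro x hx
    by_contra hno
    push_neg at hno
    refine swap_lemma G P r s t h {w} X U hA hX hU (by simp) hX3 hU2
      (insert x U) (insert w (X.erase x)) ?_ ?_ ?_ ?_ ?_ ?_
    · rw [Finset.card_insert_of_notMem (fun hc => hXUd hx hc), hU2]
    · rw [Finset.card_insert_of_notMem (fun hc => hwX (Finset.mem_of_mem_erase hc)),
        Finset.card_erase_of_mem hx, hX3]
    · ext z
      simp only [Finset.mem_union, Finset.mem_insert, Finset.mem_erase, Finset.mem_singleton]
      by_cases hzx : z = x
      · subst hzx
        simp [hx]
      · simp only [hzx, false_or, ne_eq, not_false_eq_true, true_and]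
        tauto
    · rw [Finset.disjoint_left]
      intro z hz1 hz2
      rcases Finset.mem_insert.mp hz1 with rfl | hz1
      · rcases Finset.mem_insert.mp hz2 with e | hz2
        · exact hwX (e ▸ hx)
        · exact (Finset.mem_erase.mp hz2).1 rfl
      · rcases Finset.mem_insert.mp hz2 with rfl | hz2
        · exact hwU hz1
        · exact hXUd (Finset.mem_of_mem_erase hz2) hz1
    · exact indep_insert G (hind U hU) hno
    · exact indep_insert G
        (fun a ha b hb => hind X hX a (Finset.mem_of_mem_erase ha) b (Finset.mem_of_mem_erase hb))
        (fun a ha => hw0 a (Finset.mem_of_mem_erase ha))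
  -- Claim 1
  have claim1 : 3 ≤ eB G X U := by
    rw [eB_sum_left]
    have h1 : ∀ x ∈ X, 1 ≤ (U.filter (fun y => G.Adj x y)).card := by
      intro x hx
      obtain ⟨y, hy, hadj⟩ := ha x hx
      exact Finset.card_pos.mpr ⟨y, Finset.mem_filter.mpr ⟨hy, hadj⟩⟩
    calc 3 = ∑ _x ∈ X, 1 := by rw [Finset.sum_const, hX3]; simp
    _ ≤ _ := Finset.sum_le_sum h1
  -- Step (b): w has a neighbour in U
  have hb : ∃ y ∈ U, G.Adj w y := by
    by_contra hno
    push_neg at hno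
    refine swap_lemma G P r s t h {w} X U hA hX hU (by simp) hX3 hU2
      (insert w U) X ?_ hX3 ?_ ?_ ?_ (hind X hX)
    · rw [Finset.card_insert_of_notMem hwU, hU2]
    · ext z
      simp only [Finset.mem_union, Finset.mem_insert, Finset.mem_singleton]
      tauto
    · rw [Finset.disjoint_left]
      intro z hz1 hz2
      rcases Finset.mem_insert.mp hz1 with rfl | hz1
      · exact hwX hz2
      · exact hXUd hz2 hz1
    · exact indep_insert G (hind U hU) hno
  have hw1 : 1 ≤ eB G {w} U := by
    rw [eB_sum_left, Finset.sum_singleton]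
    obtain ⟨y, hy, hadj⟩ := hb
    exact Finset.card_pos.mpr ⟨y, Finset.mem_filter.mpr ⟨hy, hadj⟩⟩
  have hadd : eB G (insert w X) U = eB G {w} U + eB G X U := by
    rw [eB_sum_left G (insert w X) U, eB_sum_left G {w} U, eB_sum_left G X U,
      Finset.sum_insert hwX, Finset.sum_singleton]
  have claim2 : 4 ≤ eB G (insert w X) U := by omega
  refine ⟨claim1, claim2, ?_⟩
  by_contra hcon
  push_neg at hcon
  -- eB Y {β} as a filter card
  have dβ : ∀ β : V, eB G (insert w X) {β} =
      ((insert w X).filter (fun x => G.Adj x β)).card := by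
    intro β
    rw [eB_sum_right, Finset.sum_singleton]
  have huU : u ∈ U := by rw [hUuv]; exact Finset.mem_insert_self u {v}
  have hvU : v ∈ U := by rw [hUuv]; simp
  have hdu : eB G (insert w X) {u} ≤ 2 := by have := hcon u huU; omega
  have hdv : eB G (insert w X) {v} ≤ 2 := by have := hcon v hvU; omega
  have hsumUV : eB G (insert w X) U =
      eB G (insert w X) {u} + eB G (insert w X) {v} := by
    rw [eB_sum_right G (insert w X) U, dβ u, dβ v, hUuv, Finset.sum_pair huv]
  have hdu2 : eB G (insert w X) {u} = 2 := by omega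
  have hdv2 : eB G (insert w X) {v} = 2 := by omega
  have hwUeB : eB G {w} U = (U.filter (fun y => G.Adj w y)).card := by
    rw [eB_sum_left, Finset.sum_singleton]
  have hwU1 : eB G {w} U = 1 := by omega
  -- the key symmetric argument
  have key : ∀ a b : V, U = {a, b} → a ≠ b → G.Adj w a → ¬ G.Adj w b →
      eB G (insert w X) {a} = 2 → eB G (insert w X) {b} = 2 → False := by
    intro a b hUab hne hwa hwb hda hdb
    have haU : a ∈ U := by rw [hUab]; exact Finset.mem_insert_self a {b}
    have hbU : b ∈ U := by rw [hUab]; simp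
    have haX : a ∉ X := fun h' => hXUd h' haU
    have hbX : b ∉ X := fun h' => hXUd h' hbU
    have hwa' : w ≠ a := by rintro rfl; exact hwU haU
    have hwb' : w ≠ b := by rintro rfl; exact hwU hbU
    have hfb : (insert w X).filter (fun x => G.Adj x b) = X.filter (fun x => G.Adj x b) := by
      rw [Finset.filter_insert, if_neg hwb]
    have hdb' : (X.filter (fun x => G.Adj x b)).card = 2 := by
      rw [← hfb, ← dβ b]; exact hdb
    have hneg : (X.filter (fun x => ¬ G.Adj x b)).card = 1 := by
      have hpn := Finset.card_filter_add_card_filter_not (s := X)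
        (p := fun x => G.Adj x b)
      rw [hX3, hdb'] at hpn
      omega
    obtain ⟨a₀, ha₀⟩ := Finset.card_eq_one.mp hneg
    have ha₀mem := ha₀ ▸ Finset.mem_singleton_self a₀
    have ha₀X : a₀ ∈ X := (Finset.mem_filter.mp ha₀mem).1
    have ha₀b : ¬ G.Adj a₀ b := (Finset.mem_filter.mp ha₀mem).2
    have hwa₀ : w ≠ a₀ := fun e => hwX (e ▸ ha₀X)
    have hba₀ : b ≠ a₀ := fun e => hbX (e ▸ ha₀X)
    have haa₀ne : a ≠ a₀ := fun e => haX (e ▸ ha₀X)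
    -- a₀'s neighbour in U must be a
    obtain ⟨y, hyU, hy⟩ := ha a₀ ha₀X
    have haa₀ : G.Adj a₀ a := by
      rw [hUab] at hyU
      rcases Finset.mem_insert.mp hyU with rfl | hyb
      · exact hy
      · rw [Finset.mem_singleton.mp hyb] at hy
        exact absurd hy ha₀b
    -- a's neighbours in insert w X are exactly {w, a₀}
    have hsub2 : ({w, a₀} : Finset V) ⊆ (insert w X).filter (fun x => G.Adj x a) := by
      intro z hz
      rcases Finset.mem_insert.mp hz with rfl | hz
      · exact Finset.mem_filter.mpr ⟨Finset.mem_insert_self _ _, hwa⟩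
      · rw [Finset.mem_singleton.mp hz]
        exact Finset.mem_filter.mpr ⟨Finset.mem_insert_of_mem ha₀X, haa₀⟩
    have hfeq : (insert w X).filter (fun x => G.Adj x a) = {w, a₀} := by
      symm
      apply Finset.eq_of_subset_of_card_le hsub2
      have hcc : ((insert w X).filter (fun x => G.Adj x a)).card = 2 := by
        rw [← dβ a]; exact hda
      rw [hcc, Finset.card_insert_of_notMem (by simp [hwa₀]), Finset.card_singleton]
    have hXa : ∀ x ∈ X, x ≠ a₀ → ¬ G.Adj x a := by
      intro x hx hxa₀ hadj
      have hmem : x ∈ (insert w X).filter (fun x => G.Adj x a) :=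
        Finset.mem_filter.mpr ⟨Finset.mem_insert_of_mem hx, hadj⟩
      rw [hfeq] at hmem
      rcases Finset.mem_insert.mp hmem with rfl | h'
      · exact hwX hx
      · exact hxa₀ (Finset.mem_singleton.mp h')
    -- final swap
    refine swap_lemma G P r s t h {w} X U hA hX hU (by simp) hX3 hU2
      {w, b, a₀} (insert a (X.erase a₀)) ?_ ?_ ?_ ?_ ?_ ?_
    · exact Finset.card_eq_three.mpr ⟨w, b, a₀, hwb', hwa₀, hba₀, rfl⟩
    · rw [Finset.card_insert_of_notMem (fun hc => haX (Finset.mem_of_mem_erase hc)),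
        Finset.card_erase_of_mem ha₀X, hX3]
    · rw [hUab]
      ext z
      simp only [Finset.mem_union, Finset.mem_insert, Finset.mem_erase, Finset.mem_singleton]
      by_cases hza : z = a₀
      · subst hza
        simp [ha₀X]
      · simp only [hza, ne_eq, not_false_eq_true, and_true, false_or, or_false, true_and]
        tauto
    · rw [Finset.disjoint_left]
      intro z hz1 hz2
      have hz2' : z = a ∨ (z ≠ a₀ ∧ z ∈ X) := by
        rcases Finset.mem_insert.mp hz2 with rfl | hz2
        · exact Or.inl rfl
        · exact Or.inr (Finset.mem_erase.mp hz2)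
      rcases Finset.mem_insert.mp hz1 with rfl | hz1
      · rcases hz2' with rfl | ⟨_, hzX⟩
        · exact hwa' rfl
        · exact hwX hzX
      rcases Finset.mem_insert.mp hz1 with rfl | hz1
      · rcases hz2' with rfl | ⟨_, hzX⟩
        · exact hne rfl
        · exact hbX hzX
      · obtain rfl : z = a₀ := Finset.mem_singleton.mp hz1
        rcases hz2' with e | ⟨hne', _⟩
        · exact haa₀ne e.symm
        · exact hne' rfl
    · exact indep3 G hwb (hw0 a₀ ha₀X) (fun h' => ha₀b h'.symm)
    · intro p hp q hq
      have hp' : p = a ∨ (p ≠ a₀ ∧ p ∈ X) := by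
        rcases Finset.mem_insert.mp hp with rfl | hp
        · exact Or.inl rfl
        · exact Or.inr (Finset.mem_erase.mp hp)
      have hq' : q = a ∨ (q ≠ a₀ ∧ q ∈ X) := by
        rcases Finset.mem_insert.mp hq with rfl | hq
        · exact Or.inl rfl
        · exact Or.inr (Finset.mem_erase.mp hq)
      rcases hp' with rfl | ⟨hpa₀, hpX⟩
      · rcases hq' with rfl | ⟨hqa₀, hqX⟩
        · exact G.loopless.irrefl _
        · exact fun hadj => hXa q hqX hqa₀ hadj.symm
      · rcases hq' with rfl | ⟨hqa₀, hqX⟩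
        · exact hXa p hpX hpa₀
        · exact hind X hX p hpX q hqX
  -- case analysis on which of u, v is adjacent to w
  by_cases hu : G.Adj w u <;> by_cases hv2 : G.Adj w v
  · have hsub : ({u, v} : Finset V) ⊆ U.filter (fun y => G.Adj w y) := by
      intro z hz
      rcases Finset.mem_insert.mp hz with rfl | hz
      · exact Finset.mem_filter.mpr ⟨huU, hu⟩
      · rw [Finset.mem_singleton.mp hz]
        exact Finset.mem_filter.mpr ⟨hvU, hv2⟩
    have hge := Finset.card_le_card hsub
    rw [Finset.card_pair huv] at hge
    omega
  · exact key u v hUuv huv hu hv2 hdu2 hdv2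
  · exact key v u (hUuv.trans (Finset.pair_comm u v)) huv.symm hv2 hu hdv2 hdu2
  · obtain ⟨y, hy, hadj⟩ := hb
    rw [hUuv] at hy
    rcases Finset.mem_insert.mp hy with rfl | hy
    · exact hu hadj
    · rw [Finset.mem_singleton.mp hy] at hadj
      exact hv2 hadj
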